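/- Let a₁₁, a₂₂, a³³, c₁₁, c₂₂ be positive real numbers and c₁₂ a real number. Define B = √(a³³·((√a₁₁·c₂₂ + √a₂₂·c₁₁)² + (√a₁₁ − √a₂₂)²·c₁₂²)), b₁₁ = a³³·B⁻¹·c₁₁⁻¹·(a₁₁·(c₁₁·c₂₂ − c₁₂²) + √(a₁₁·a₂₂)·(c₁₁² + c₁₂²)), b₁₂ = a³³·B⁻¹·√(a₁₁·a₂₂)·(c₁₁ + c₂₂), and b₂₂ = a³³·B⁻¹·c₂₂⁻¹·(a₂₂·(c₁₁·c₂₂ − c₁₂²) + √(a₁₁·a₂₂)·(c₁₂² + c₂₂²)). Then b₁₁·b₁₂·c₁₁·c₁₂/(a₁₁·a³³) + b₁₂·b₂₂·c₁₂·c₂₂/(a₂₂·a³³) = c₁₂·(c₁₁ + c₂₂). -/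

import Mathlib

/-- The exact computation ("cal3rdterm") from the proof of Proposition 5.6
(`cadifference`): the `x₁x₂`-coefficient identity of the contact-angle difference. -/
theorem contact_angle_cross_term
    (a11 a22 a33 c11 c22 : ℝ) (ha11 : 0 < a11) (ha22 : 0 < a22) (ha33 : 0 < a33)
    (hc11 : 0 < c11) (hc22 : 0 < c22) (c12 : ℝ)
    (B b11 b12 b22 : ℝ)
    (hB : B = Real.sqrt (a33 * ((Real.sqrt a11 * c22 + Real.sqrt a22 * c11) ^ 2 +
      (Real.sqrt a11 - Real.sqrt a22) ^ 2 * c12 ^ 2)))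
    (hb11 : b11 = a33 * B⁻¹ * c11⁻¹ * (a11 * (c11 * c22 - c12 ^ 2) +
      Real.sqrt (a11 * a22) * (c11 ^ 2 + c12 ^ 2)))
    (hb12 : b12 = a33 * B⁻¹ * Real.sqrt (a11 * a22) * (c11 + c22))
    (hb22 : b22 = a33 * B⁻¹ * c22⁻¹ * (a22 * (c11 * c22 - c12 ^ 2) +
      Real.sqrt (a11 * a22) * (c12 ^ 2 + c22 ^ 2))) :
    b11 * b12 * c11 * c12 / (a11 * a33) + b12 * b22 * c12 * c22 / (a22 * a33) =
      c12 * (c11 + c22) := by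
  set s1 := Real.sqrt a11 with hs1def
  set s2 := Real.sqrt a22 with hs2def
  have hs1 : s1 ^ 2 = a11 := Real.sq_sqrt ha11.le
  have hs2 : s2 ^ 2 = a22 := Real.sq_sqrt ha22.le
  have hs1p : 0 < s1 := Real.sqrt_pos.mpr ha11
  have hs2p : 0 < s2 := Real.sqrt_pos.mpr ha22
  have hs12 : Real.sqrt (a11 * a22) = s1 * s2 := Real.sqrt_mul ha11.le a22
  have hDpos : 0 < a33 * ((s1 * c22 + s2 * c11) ^ 2 + (s1 - s2) ^ 2 * c12 ^ 2) := by
    apply mul_pos ha33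
    have h1 : 0 < (s1 * c22 + s2 * c11) ^ 2 := by positivity
    nlinarith [sq_nonneg ((s1 - s2) * c12)]
  have hBpos : 0 < B := by rw [hB]; exact Real.sqrt_pos.mpr hDpos
  have hB2 : B ^ 2 = a33 * ((s1 * c22 + s2 * c11) ^ 2 + (s1 - s2) ^ 2 * c12 ^ 2) := by
    rw [hB]; exact Real.sq_sqrt hDpos.le
  subst hb11 hb12 hb22
  rw [hs12, ← hs1, ← hs2]
  field_simp
  linear_combination (-c12) * hB2
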